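/- Let V be a finite nontrivial Boolean ring with cardinality 2^N. Then V has exactly N logical primes, i.e., the set {p ∈ V | p ≠ 1 and for all a ∈ V, p*a = 0 implies a = 0 or a = 1 + p} has exactly N elements. -/

import Mathlib

lemma aux_supIrred_iff_isAtom {α : Type*} [BooleanAlgebra α] {a : α} :
    SupIrred a ↔ IsAtom a := by
  constructor
  · intro h
    refine ⟨h.ne_bot, fun b hb => ?_⟩
    have key : b ⊔ (a ⊓ bᶜ) = a := by
      rw [sup_inf_left, sup_eq_right.2 hb.le, sup_compl_eq_top, inf_top_eq]
    rcases h.2 key with h1 | h1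
    · exact absurd h1 hb.ne
    · have : a ≤ bᶜ := inf_eq_left.1 h1
      have hbb : b ≤ b ⊓ bᶜ := le_inf le_rfl (hb.le.trans this)
      simpa using hbb.trans (le_of_eq (inf_compl_eq_bot))
  · intro h
    refine ⟨fun hmin => h.1 (le_bot_iff.1 (hmin bot_le)), fun {b c} hbc => ?_⟩
    rcases h.le_iff.1 (le_sup_left.trans hbc.le) with h1 | h1
    · subst h1; right; simpa using hbc
    · exact Or.inl h1

/-- A finite nontrivial Boolean ring of cardinality `2 ^ N` has exactly
`N` logical primes. -/
theorem ncard_logical_primes (V : Type*) [CommRing V] [Fintype V] [Nontrivial V]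
    (hB : ∀ x : V, x * x = x) (N : ℕ) (hcard : Fintype.card V = 2 ^ N) :
    {p : V | p ≠ 1 ∧ ∀ a : V, p * a = 0 → a = 0 ∨ a = 1 + p}.ncard = N := by
  classical
  letI : BooleanRing V := { ‹CommRing V› with isIdempotentElem := by intro x; exact hB x }
  letI : BooleanAlgebra V := BooleanRing.toBooleanAlgebra
  have hinf : ∀ a b : V, a ⊓ b = a * b := fun _ _ => rfl
  have hcompl : ∀ a : V, aᶜ = 1 + a := fun _ => rfl
  have hbot : (⊥ : V) = 0 := rfl
  have htop : (⊤ : V) = 1 := rfl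
  have hadd : ∀ a : V, a + a = 0 := fun a => BooleanRing.add_self a
  -- the logical primes are exactly the complements of atoms
  have hset : {p : V | p ≠ 1 ∧ ∀ a : V, p * a = 0 → a = 0 ∨ a = 1 + p}
      = (fun a : V => aᶜ) '' {a : V | IsAtom a} := by
    ext p
    simp only [Set.mem_setOf_eq, Set.mem_image]
    constructor
    · rintro ⟨hp1, hp⟩
      refine ⟨pᶜ, ⟨?_, fun b hb => ?_⟩, compl_compl p⟩
      · intro h
        apply hp1
        rw [hcompl, hbot] at h
        have := congrArg (fun x => 1 + x) h
        simpa [← add_assoc, hadd, eq_comm] using this.symm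
      · have h0 : p * b = 0 := by
          rw [← hinf, ← hbot]
          have : b ≤ pᶜ := hb.le
          rw [le_compl_iff_disjoint_left] at this
          rw [inf_comm]
          exact (disjoint_comm.1 this).eq_bot
        rcases hp b h0 with h1 | h1
        · rw [← hbot] at h1; exact h1
        · exfalso; apply hb.ne; rw [h1, hcompl]
    · rintro ⟨a, ha, rfl⟩
      have h1pa : (1 : V) + aᶜ = a := by
        rw [hcompl, ← add_assoc, hadd, zero_add]
      constructor
      · intro h
        apply ha.1
        rw [hbot, ← h1pa, h, hadd]
      · intro b hb
        have hble : b ≤ a := by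
          rw [← compl_compl a, le_compl_iff_disjoint_left, disjoint_iff, hinf, hbot,
            mul_comm]
          rw [mul_comm] at hb
          exact hb
        rcases ha.le_iff.1 hble with h1 | h1
        · left; rw [h1, hbot]
        · right; rw [h1, h1pa]
  rw [hset, Set.ncard_image_of_injective _ compl_injective]
  -- now count the atoms using Birkhoff representation
  have e1 : V ≃o LowerSet {a : V // SupIrred a} := OrderIso.lowerSetSupIrred
  have e2 : LowerSet {a : V // SupIrred a} ≃ Set {a : V // SupIrred a} :=
    { toFun := fun s => (s : Set _)
      invFun := fun t => ⟨t, by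
        intro a b hba ha
        have hA : IsAtom a.1 := aux_supIrred_iff_isAtom.1 a.2
        have hB : IsAtom b.1 := aux_supIrred_iff_isAtom.1 b.2
        have : b.1 = a.1 := by
          rcases hA.le_iff.1 hba with h | h
          · exact absurd h hB.1
          · exact h
        rwa [show b = a from Subtype.ext this]⟩
      left_inv := fun s => by ext x; rfl
      right_inv := fun t => rfl }
  have e3 : {a : V // SupIrred a} ≃ {a : V // IsAtom a} :=
    Equiv.subtypeEquivRight fun a => aux_supIrred_iff_isAtom
  have ecard : Fintype.card V = 2 ^ Fintype.card {a : V // IsAtom a} := by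
    rw [Fintype.card_congr (e1.toEquiv.trans e2), Fintype.card_set,
      Fintype.card_congr e3]
  have hN : Fintype.card {a : V // IsAtom a} = N :=
    Nat.pow_right_injective le_rfl (ecard.symm.trans hcard)
  rw [← hN, Set.ncard_eq_toFinset_card', Set.toFinset_setOf, Fintype.card_subtype]
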